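/- arXiv:1811.08090 — 2 statements merged into one kernel-verified Lean document; each statement's English description precedes it below -/
import Mathlib

section
/- Let π in S_n and let i < j with π(i) < π(j). If no index k with i < k < j satisfies π(i) < π(k) < π(j), then inv(π * (i,j)) = inv(π) + 1. -/
/-- The number of inversions of a permutation of `Fin n`. -/
def invNum {n : ℕ} (π : Equiv.Perm (Fin n)) : ℕ :=
  (Finset.univ.filter fun p : Fin n × Fin n => p.1 < p.2 ∧ π p.2 < π p.1).card

theorem invNum_mul_swap_of_no_middle {n : ℕ} (π : Equiv.Perm (Fin n)) (i j : Fin n)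
    (hij : i < j) (hval : π i < π j)
    (hmid : ∀ k : Fin n, i < k → k < j → ¬(π i < π k ∧ π k < π j)) :
    invNum (π * Equiv.swap i j) = invNum π + 1 := by
  classical
  set s := Equiv.swap i j with hs
  have hne : i ≠ j := ne_of_lt hij
  have hsi : s i = j := Equiv.swap_apply_left i j
  have hsj : s j = i := Equiv.swap_apply_right i j
  have hsk : ∀ k : Fin n, k ≠ i → k ≠ j → s k = k := fun k h1 h2 =>
    Equiv.swap_apply_of_ne_of_ne h1 h2
  have hss : ∀ a, s (s a) = a := fun a => Equiv.swap_apply_self i j a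
  have hsinj : Function.Injective s := s.injective
  set h : Fin n × Fin n → Fin n × Fin n :=
    fun p => if s p.1 < s p.2 then (s p.1, s p.2) else p with hh
  set A := Finset.univ.filter
    fun p : Fin n × Fin n => p.1 < p.2 ∧ (π * s) p.2 < (π * s) p.1 with hA
  set B := Finset.univ.filter fun p : Fin n × Fin n => p.1 < p.2 ∧ π p.2 < π p.1 with hB
  have hmulA : ∀ a : Fin n, (π * s) a = π (s a) := fun a => rfl
  have flip : ∀ p : Fin n × Fin n, p.1 < p.2 → ¬ s p.1 < s p.2 →
      (p.1 = i ∧ p.2 = j) ∨ (p.1 = i ∧ i < p.2 ∧ p.2 < j) ∨ (p.2 = j ∧ i < p.1 ∧ p.1 < j) := by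
    intro p h1 h2
    by_cases e1 : p.1 = i
    · by_cases e2 : p.2 = j
      · exact Or.inl ⟨e1, e2⟩
      · have hp2i : p.2 ≠ i := by
          intro hc; rw [e1, hc] at h1; exact lt_irrefl i h1
        have hsp2 : s p.2 = p.2 := hsk _ hp2i e2
        have : ¬ j < p.2 := by rw [e1, hsi, hsp2] at h2; exact h2
        have hlt : p.2 < j := lt_of_le_of_ne (not_lt.mp this) e2
        exact Or.inr (Or.inl ⟨e1, e1 ▸ h1, hlt⟩)
    · by_cases e2 : p.2 = j
      · have hp1j : p.1 ≠ j := by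
          intro hc; rw [hc, e2] at h1; exact lt_irrefl j h1
        have hsp1 : s p.1 = p.1 := hsk _ e1 hp1j
        have : ¬ p.1 < i := by rw [e2, hsj, hsp1] at h2; exact h2
        have hlt : i < p.1 := lt_of_le_of_ne (not_lt.mp this) (Ne.symm e1)
        exact Or.inr (Or.inr ⟨e2, hlt, e2 ▸ h1⟩)
      · exfalso
        by_cases f1 : p.1 = j
        · have hp2i : p.2 ≠ i := by
            intro hc
            rw [f1, hc] at h1
            exact absurd (lt_trans hij h1) (lt_irrefl i)
          have hsp2 : s p.2 = p.2 := hsk _ hp2i e2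
          apply h2
          rw [f1, hsj, hsp2]
          exact lt_trans hij (f1 ▸ h1)
        · by_cases f2 : p.2 = i
          · have hsp1 : s p.1 = p.1 := hsk _ e1 f1
            apply h2
            rw [f2, hsi, hsp1]
            exact lt_trans (f2 ▸ h1) hij
          · apply h2
            rw [hsk _ e1 f1, hsk _ f2 e2]
            exact h1
  have hAmem : ∀ p : Fin n × Fin n,
      p ∈ A ↔ p.1 < p.2 ∧ π (s p.2) < π (s p.1) := by
    intro p; simp [hA, hmulA]
  have hBmem : ∀ p : Fin n × Fin n, p ∈ B ↔ p.1 < p.2 ∧ π p.2 < π p.1 := by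
    intro p; simp [hB]
  have hijB : (i, j) ∉ B := by
    rw [hBmem]
    rintro ⟨-, hc⟩
    exact absurd hval (not_lt.mpr hc.le)
  have hcard : A.card = (insert (i, j) B).card := by
    apply Finset.card_nbij' h h
    · -- ∀ p ∈ A, h p ∈ insert (i,j) B
      intro p hp
      rw [Finset.mem_coe, hAmem] at hp
      obtain ⟨h1, h2⟩ := hp
      by_cases hc : s p.1 < s p.2
      · have : h p = (s p.1, s p.2) := by rw [hh]; simp [hc]
        rw [this]
        apply Finset.mem_insert_of_mem
        rw [hBmem]
        exact ⟨hc, h2⟩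
      · have hp' : h p = p := by rw [hh]; simp [hc]
        rw [hp']
        rcases flip p h1 hc with ⟨e1, e2⟩ | ⟨e1, m1, m2⟩ | ⟨e2, m1, m2⟩
        · have hpij : p = (i, j) := Prod.ext e1 e2
          rw [hpij]
          exact Finset.mem_insert_self _ _
        · -- p.1 = i, middle p.2
          apply Finset.mem_insert_of_mem
          rw [hBmem]
          refine ⟨h1, ?_⟩
          rw [e1, hsi] at h2
          rw [hsk _ (ne_of_gt m1) (ne_of_lt m2)] at h2
          -- h2 : π p.2 < π j
          have hm := hmid p.2 m1 m2
          rw [e1]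
          rcases lt_trichotomy (π p.2) (π i) with hlt | heq | hgt
          · exact hlt
          · exact absurd (π.injective heq) (ne_of_gt m1)
          · exact absurd ⟨hgt, h2⟩ hm
        · apply Finset.mem_insert_of_mem
          rw [hBmem]
          refine ⟨h1, ?_⟩
          rw [e2, hsj] at h2
          rw [hsk _ (ne_of_gt m1) (ne_of_lt m2)] at h2
          -- h2 : π i < π p.1
          have hm := hmid p.1 m1 m2
          rw [e2]
          rcases lt_trichotomy (π j) (π p.1) with hlt | heq | hgt
          · exact hlt
          · exact absurd (π.injective heq.symm) (ne_of_lt m2)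
          · exact absurd ⟨h2, hgt⟩ hm
    · -- ∀ p ∈ insert (i,j) B, h p ∈ A
      intro p hp
      rcases Finset.mem_insert.mp hp with rfl | hp
      · have : h (i, j) = (i, j) := by
          rw [hh]; simp only [hsi, hsj]
          rw [if_neg (not_lt.mpr hij.le)]
        rw [this, Finset.mem_coe, hAmem]
        refine ⟨hij, ?_⟩
        rw [hsi, hsj]
        exact hval
      · rw [hBmem] at hp
        obtain ⟨h1, h2⟩ := hp
        by_cases hc : s p.1 < s p.2
        · have : h p = (s p.1, s p.2) := by rw [hh]; simp [hc]
          rw [this, Finset.mem_coe, hAmem]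
          refine ⟨hc, ?_⟩
          simpa [hss] using h2
        · have hp' : h p = p := by rw [hh]; simp [hc]
          rw [hp', Finset.mem_coe, hAmem]
          refine ⟨h1, ?_⟩
          rcases flip p h1 hc with ⟨e1, e2⟩ | ⟨e1, m1, m2⟩ | ⟨e2, m1, m2⟩
          · exfalso
            rw [e1, e2] at h2
            exact absurd hval (not_lt.mpr h2.le)
          · rw [e1, hsi, hsk _ (ne_of_gt m1) (ne_of_lt m2)]
            rw [e1] at h2
            exact lt_trans h2 hval
          · rw [e2, hsj, hsk _ (ne_of_gt m1) (ne_of_lt m2)]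
            rw [e2] at h2
            exact lt_trans hval h2
    · -- left inverse on A
      intro p hp
      rw [Finset.mem_coe, hAmem] at hp
      by_cases hc : s p.1 < s p.2
      · have e : h p = (s p.1, s p.2) := by rw [hh]; simp [hc]
        rw [e, hh]
        simp only [hss]
        rw [if_pos hp.1]
      · have e : h p = p := by rw [hh]; simp [hc]
        rw [e, e]
    · -- right inverse on insert
      intro p hp
      have h1 : p.1 < p.2 := by
        rcases Finset.mem_insert.mp hp with rfl | hp
        · exact hij
        · exact ((hBmem p).mp hp).1
      by_cases hc : s p.1 < s p.2
      · have e : h p = (s p.1, s p.2) := by rw [hh]; simp [hc]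
        rw [e, hh]
        simp only [hss]
        rw [if_pos h1]
      · have e : h p = p := by rw [hh]; simp [hc]
        rw [e, e]
  rw [invNum, invNum]
  rw [← hA, ← hB, hcard, Finset.card_insert_of_notMem hijB]
end

section
/- In the Bruhat order on S_n, every interval [π, γ] of length 2 (i.e., with inv(γ) = inv(π) + 2 and π < γ) contains exactly two elements strictly between π and γ. That is, the Bruhat order is a thin poset. -/
open Equiv Finset

/-- The cover relations generating the (strong) Bruhat order on `S_n`. -/
def BruhatCov {n : ℕ} (π σ : Equiv.Perm (Fin n)) : Prop :=
  (∃ i j : Fin n, i ≠ j ∧ σ = π * Equiv.swap i j) ∧ invNum σ = invNum π + 1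

/-- The strict Bruhat order: the transitive closure of the cover relations. -/
def BruhatLt {n : ℕ} : Equiv.Perm (Fin n) → Equiv.Perm (Fin n) → Prop :=
  Relation.TransGen BruhatCov

namespace BruhatAux

variable {n : ℕ}

lemma invNum_mul_swap_card (π : Equiv.Perm (Fin n)) (i j : Fin n) :
    invNum (π * Equiv.swap i j) =
      (Finset.univ.filter fun p : Fin n × Fin n =>
        Equiv.swap i j p.1 < Equiv.swap i j p.2 ∧ π p.2 < π p.1).card := by
  unfold invNum
  apply Finset.card_bij' (fun p _ => (Equiv.swap i j p.1, Equiv.swap i j p.2))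
    (fun p _ => (Equiv.swap i j p.1, Equiv.swap i j p.2))
  · intro p hp
    simp only [mem_filter, mem_univ, true_and] at hp ⊢
    simp [Equiv.swap_apply_self, hp.1, hp.2, Equiv.Perm.mul_apply]
    exact hp.2
  · intro p hp
    simp only [mem_filter, mem_univ, true_and, Equiv.Perm.mul_apply] at hp ⊢
    refine Finset.mem_filter.mpr ⟨Finset.mem_univ _, ?_⟩
    simpa [Equiv.swap_apply_self] using hp
  · intro p _; simp [Equiv.swap_apply_self]
  · intro p _; simp [Equiv.swap_apply_self]

lemma Dp_eq (π : Equiv.Perm (Fin n)) {i j : Fin n} (hij : i < j) (hvij : π i < π j) :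
    (Finset.univ.filter fun p : Fin n × Fin n =>
        (Equiv.swap i j p.1 < Equiv.swap i j p.2 ∧ π p.2 < π p.1) ∧ ¬ p.1 < p.2)
      = insert ((j, i) : Fin n × Fin n)
          ((((Finset.Ioo i j).filter fun k => π i < π k).image fun k => (k, i)) ∪
           (((Finset.Ioo i j).filter fun k => π k < π j).image fun k => (j, k))) := by
  ext ⟨u, v⟩
  simp only [mem_filter, mem_univ, true_and, mem_insert, mem_union, mem_image,
    mem_Ioo, Prod.mk.injEq]
  constructor
  · rintro ⟨⟨hsw, hπvu⟩, hnlt⟩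
    have huv : v < u := by
      rcases lt_trichotomy u v with h | h | h
      · exact absurd h hnlt
      · rw [h] at hπvu; exact absurd hπvu (lt_irrefl _)
      · exact h
    by_cases hui : u = i
    · have hvi : v ≠ i := by rw [← hui]; exact ne_of_lt huv
      have hvj : v ≠ j := ne_of_lt (by rw [hui] at huv; exact lt_trans huv hij)
      rw [hui, Equiv.swap_apply_left, Equiv.swap_apply_of_ne_of_ne hvi hvj] at hsw
      rw [hui] at huv
      exact absurd (lt_trans hsw (lt_trans huv hij)) (lt_irrefl _)
    by_cases huj : u = j
    · by_cases hvi : v = i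
      · exact Or.inl ⟨huj, hvi⟩
      · have hvj : v ≠ j := by rw [← huj]; exact ne_of_lt huv
        rw [huj, Equiv.swap_apply_right, Equiv.swap_apply_of_ne_of_ne hvi hvj] at hsw
        rw [huj] at huv hπvu
        exact Or.inr (Or.inr ⟨v, ⟨⟨hsw, huv⟩, hπvu⟩, huj.symm, rfl⟩)
    · rw [Equiv.swap_apply_of_ne_of_ne hui huj] at hsw
      by_cases hvi : v = i
      · rw [hvi, Equiv.swap_apply_left] at hsw
        rw [hvi] at huv hπvu
        exact Or.inr (Or.inl ⟨u, ⟨⟨huv, hsw⟩, hπvu⟩, rfl, hvi.symm⟩)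
      by_cases hvj : v = j
      · rw [hvj, Equiv.swap_apply_right] at hsw
        rw [hvj] at huv
        exact absurd (lt_trans (lt_trans hsw hij) huv) (lt_irrefl _)
      · rw [Equiv.swap_apply_of_ne_of_ne hvi hvj] at hsw
        exact absurd hsw hnlt
  · rintro (⟨hu, hv⟩ | ⟨k, ⟨⟨hik, hkj⟩, hπ⟩, hk1, hk2⟩ | ⟨k, ⟨⟨hik, hkj⟩, hπ⟩, hk1, hk2⟩)
    · rw [hu, hv]
      refine ⟨⟨?_, hvij⟩, not_lt.mpr (le_of_lt hij)⟩
      rw [Equiv.swap_apply_right, Equiv.swap_apply_left]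
      exact hij
    · rw [← hk1, ← hk2]
      have hki : k ≠ i := ne_of_gt hik
      have hkj' : k ≠ j := ne_of_lt hkj
      refine ⟨⟨?_, hπ⟩, not_lt.mpr (le_of_lt hik)⟩
      rw [Equiv.swap_apply_of_ne_of_ne hki hkj', Equiv.swap_apply_left]
      exact hkj
    · rw [← hk1, ← hk2]
      have hki : k ≠ i := ne_of_gt hik
      have hkj' : k ≠ j := ne_of_lt hkj
      refine ⟨⟨?_, hπ⟩, not_lt.mpr (le_of_lt hkj)⟩
      rw [Equiv.swap_apply_of_ne_of_ne hki hkj', Equiv.swap_apply_right]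
      exact hik

lemma Dm_eq (π : Equiv.Perm (Fin n)) {i j : Fin n} (hij : i < j) (hvij : π i < π j) :
    (Finset.univ.filter fun p : Fin n × Fin n =>
        (p.1 < p.2 ∧ π p.2 < π p.1) ∧ ¬ Equiv.swap i j p.1 < Equiv.swap i j p.2)
      = ((((Finset.Ioo i j).filter fun k => π k < π i).image fun k => (i, k)) ∪
         (((Finset.Ioo i j).filter fun k => π j < π k).image fun k => (k, j))) := by
  ext ⟨u, v⟩
  simp only [mem_filter, mem_univ, true_and, mem_union, mem_image,
    mem_Ioo, Prod.mk.injEq]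
  constructor
  · rintro ⟨⟨hlt, hπvu⟩, hnsw⟩
    by_cases hui : u = i
    · by_cases hvj : v = j
      · rw [hui, hvj] at hπvu
        exact absurd hvij (not_lt.mpr (le_of_lt hπvu))
      · have hvi : v ≠ i := by rw [← hui]; exact ne_of_gt hlt
        rw [hui, Equiv.swap_apply_left, Equiv.swap_apply_of_ne_of_ne hvi hvj] at hnsw
        rw [hui] at hlt hπvu
        have hvj' : v < j := by
          rcases lt_trichotomy v j with h | h | h
          · exact h
          · exact absurd h hvj
          · exact absurd h hnsw
        exact Or.inl ⟨v, ⟨⟨hlt, hvj'⟩, hπvu⟩, hui.symm, rfl⟩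
    by_cases huj : u = j
    · have hvj : v ≠ j := by rw [← huj]; exact ne_of_gt hlt
      have hvi : v ≠ i := by
        intro hh
        rw [huj, hh] at hlt
        exact absurd (lt_trans hij hlt) (lt_irrefl _)
      rw [huj, Equiv.swap_apply_right, Equiv.swap_apply_of_ne_of_ne hvi hvj] at hnsw
      rw [huj] at hlt
      exact absurd (lt_trans hij hlt) hnsw
    · rw [Equiv.swap_apply_of_ne_of_ne hui huj] at hnsw
      by_cases hvi : v = i
      · rw [hvi, Equiv.swap_apply_left] at hnsw
        rw [hvi] at hlt
        exact absurd (lt_trans hlt hij) hnsw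
      by_cases hvj : v = j
      · rw [hvj, Equiv.swap_apply_right] at hnsw
        have hiu : i < u := lt_of_le_of_ne (not_lt.mp hnsw) (Ne.symm hui)
        rw [hvj] at hlt hπvu
        exact Or.inr ⟨u, ⟨⟨hiu, hlt⟩, hπvu⟩, rfl, hvj.symm⟩
      · rw [Equiv.swap_apply_of_ne_of_ne hvi hvj] at hnsw
        exact absurd hlt hnsw
  · rintro (⟨k, ⟨⟨hik, hkj⟩, hπ⟩, hk1, hk2⟩ | ⟨k, ⟨⟨hik, hkj⟩, hπ⟩, hk1, hk2⟩)
    · rw [← hk1, ← hk2]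
      have hki : k ≠ i := ne_of_gt hik
      have hkj' : k ≠ j := ne_of_lt hkj
      refine ⟨⟨hik, hπ⟩, ?_⟩
      rw [Equiv.swap_apply_left, Equiv.swap_apply_of_ne_of_ne hki hkj']
      exact not_lt.mpr (le_of_lt hkj)
    · rw [← hk1, ← hk2]
      have hki : k ≠ i := ne_of_gt hik
      have hkj' : k ≠ j := ne_of_lt hkj
      refine ⟨⟨hkj, hπ⟩, ?_⟩
      rw [Equiv.swap_apply_right, Equiv.swap_apply_of_ne_of_ne hki hkj']
      exact not_lt.mpr (le_of_lt hik)
lemma invNum_swap_of_lt (π : Equiv.Perm (Fin n)) {i j : Fin n} (hij : i < j) (hv : π i < π j) :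
    invNum (π * Equiv.swap i j) =
      invNum π + 1 + 2 * ((Finset.Ioo i j).filter fun k => π i < π k ∧ π k < π j).card := by
  classical
  have hX := invNum_mul_swap_card π i j
  have splitX := Finset.card_filter_add_card_filter_not
    (s := Finset.univ.filter fun p : Fin n × Fin n =>
      Equiv.swap i j p.1 < Equiv.swap i j p.2 ∧ π p.2 < π p.1)
    (p := fun p => p.1 < p.2)
  have splitY := Finset.card_filter_add_card_filter_not
    (s := Finset.univ.filter fun p : Fin n × Fin n => p.1 < p.2 ∧ π p.2 < π p.1)
    (p := fun p => Equiv.swap i j p.1 < Equiv.swap i j p.2)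
  rw [Finset.filter_filter, Finset.filter_filter] at splitX splitY
  rw [Dp_eq π hij hv] at splitX
  rw [Dm_eq π hij hv] at splitY
  have hcomm : (Finset.univ.filter fun p : Fin n × Fin n =>
      (Equiv.swap i j p.1 < Equiv.swap i j p.2 ∧ π p.2 < π p.1) ∧ p.1 < p.2)
      = (Finset.univ.filter fun p : Fin n × Fin n =>
      (p.1 < p.2 ∧ π p.2 < π p.1) ∧ Equiv.swap i j p.1 < Equiv.swap i j p.2) := by
    ext p; simp only [mem_filter, mem_univ, true_and]; tauto
  rw [hcomm] at splitX
  -- cards of the explicit sets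
  have hinj1 : Function.Injective (fun k : Fin n => ((k, i) : Fin n × Fin n)) := by
    intro a b h; simpa [Prod.mk.injEq] using h
  have hinj2 : Function.Injective (fun k : Fin n => ((j, k) : Fin n × Fin n)) := by
    intro a b h; simpa [Prod.mk.injEq] using h
  have hinj3 : Function.Injective (fun k : Fin n => ((i, k) : Fin n × Fin n)) := by
    intro a b h; simpa [Prod.mk.injEq] using h
  have hinj4 : Function.Injective (fun k : Fin n => ((k, j) : Fin n × Fin n)) := by
    intro a b h; simpa [Prod.mk.injEq] using h
  have hdisj1 : Disjoint (((Finset.Ioo i j).filter fun k => π i < π k).image fun k => ((k, i) : Fin n × Fin n))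
      (((Finset.Ioo i j).filter fun k => π k < π j).image fun k => ((j, k) : Fin n × Fin n)) := by
    rw [Finset.disjoint_left]
    rintro ⟨u, v⟩ h1 h2
    simp only [mem_image, mem_filter, mem_Ioo, Prod.mk.injEq] at h1 h2
    obtain ⟨k, ⟨⟨_, _⟩, _⟩, _, hk2⟩ := h1
    obtain ⟨k', ⟨⟨hk'1, _⟩, _⟩, _, hk'2⟩ := h2
    rw [← hk2] at hk'2
    rw [← hk'2] at hk'1
    exact absurd hk'1 (lt_irrefl _)
  have hnotmem : ((j, i) : Fin n × Fin n) ∉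
      ((((Finset.Ioo i j).filter fun k => π i < π k).image fun k => ((k, i) : Fin n × Fin n)) ∪
       (((Finset.Ioo i j).filter fun k => π k < π j).image fun k => ((j, k) : Fin n × Fin n))) := by
    simp only [mem_union, mem_image, mem_filter, mem_Ioo, Prod.mk.injEq, not_or, not_exists]
    constructor
    · rintro k ⟨⟨⟨_, hkj⟩, _⟩, hk1, _⟩
      rw [hk1] at hkj; exact absurd hkj (lt_irrefl _)
    · rintro k ⟨⟨⟨hik, _⟩, _⟩, _, hk2⟩
      rw [hk2] at hik; exact absurd hik (lt_irrefl _)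
  have hdisj2 : Disjoint (((Finset.Ioo i j).filter fun k => π k < π i).image fun k => ((i, k) : Fin n × Fin n))
      (((Finset.Ioo i j).filter fun k => π j < π k).image fun k => ((k, j) : Fin n × Fin n)) := by
    rw [Finset.disjoint_left]
    rintro ⟨u, v⟩ h1 h2
    simp only [mem_image, mem_filter, mem_Ioo, Prod.mk.injEq] at h1 h2
    obtain ⟨k, ⟨⟨hik, _⟩, _⟩, hk1, _⟩ := h1
    obtain ⟨k', ⟨⟨hik', _⟩, _⟩, hk'1, _⟩ := h2
    exact absurd (hk'1.trans hk1.symm) (ne_of_gt hik')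
  rw [Finset.card_insert_of_notMem hnotmem, Finset.card_union_of_disjoint hdisj1] at splitX
  rw [Finset.card_union_of_disjoint hdisj2] at splitY
  rw [Finset.card_image_of_injective _ hinj1, Finset.card_image_of_injective _ hinj2] at splitX
  rw [Finset.card_image_of_injective _ hinj3, Finset.card_image_of_injective _ hinj4] at splitY
  -- counting identities
  have hc1 : ((Finset.Ioo i j).filter fun k => π i < π k)
      = ((Finset.Ioo i j).filter fun k => π i < π k ∧ π k < π j)
        ∪ ((Finset.Ioo i j).filter fun k => π j < π k) := by
    ext k
    simp only [mem_union, mem_filter, mem_Ioo]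
    constructor
    · rintro ⟨⟨hik, hkj⟩, hπ⟩
      rcases lt_trichotomy (π k) (π j) with h | h | h
      · exact Or.inl ⟨⟨hik, hkj⟩, hπ, h⟩
      · exact absurd (π.injective h) (ne_of_lt hkj)
      · exact Or.inr ⟨⟨hik, hkj⟩, h⟩
    · rintro (⟨hk, hπ, _⟩ | ⟨hk, hπ⟩)
      · exact ⟨hk, hπ⟩
      · exact ⟨hk, lt_trans hv hπ⟩
  have hc2 : ((Finset.Ioo i j).filter fun k => π k < π j)
      = ((Finset.Ioo i j).filter fun k => π i < π k ∧ π k < π j)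
        ∪ ((Finset.Ioo i j).filter fun k => π k < π i) := by
    ext k
    simp only [mem_union, mem_filter, mem_Ioo]
    constructor
    · rintro ⟨⟨hik, hkj⟩, hπ⟩
      rcases lt_trichotomy (π k) (π i) with h | h | h
      · exact Or.inr ⟨⟨hik, hkj⟩, h⟩
      · exact absurd (π.injective h) (ne_of_gt hik)
      · exact Or.inl ⟨⟨hik, hkj⟩, h, hπ⟩
    · rintro (⟨hk, _, hπ⟩ | ⟨hk, hπ⟩)
      · exact ⟨hk, hπ⟩
      · exact ⟨hk, lt_trans hπ hv⟩
  have hd1 : Disjoint ((Finset.Ioo i j).filter fun k => π i < π k ∧ π k < π j)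
      ((Finset.Ioo i j).filter fun k => π j < π k) := by
    rw [Finset.disjoint_left]
    intro k h1 h2
    simp only [mem_filter] at h1 h2
    exact absurd (lt_trans h1.2.2 h2.2) (lt_irrefl _)
  have hd2 : Disjoint ((Finset.Ioo i j).filter fun k => π i < π k ∧ π k < π j)
      ((Finset.Ioo i j).filter fun k => π k < π i) := by
    rw [Finset.disjoint_left]
    intro k h1 h2
    simp only [mem_filter] at h1 h2
    exact absurd (lt_trans h1.2.1 h2.2) (lt_irrefl _)
  have e1 := congrArg Finset.card hc1
  have e2 := congrArg Finset.card hc2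
  rw [Finset.card_union_of_disjoint hd1] at e1
  rw [Finset.card_union_of_disjoint hd2] at e2
  have hYdef : invNum π = (Finset.univ.filter fun p : Fin n × Fin n =>
      p.1 < p.2 ∧ π p.2 < π p.1).card := rfl
  omega


lemma invNum_swap_of_gt (π : Equiv.Perm (Fin n)) {i j : Fin n} (hij : i < j) (hv : π j < π i) :
    invNum (π * Equiv.swap i j) + 1 +
      2 * ((Finset.Ioo i j).filter fun k => π j < π k ∧ π k < π i).card = invNum π := by
  have hv' : (π * Equiv.swap i j) i < (π * Equiv.swap i j) j := by
    simp only [Equiv.Perm.mul_apply, Equiv.swap_apply_left, Equiv.swap_apply_right]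
    exact hv
  have h := invNum_swap_of_lt (π * Equiv.swap i j) hij hv'
  rw [mul_assoc, Equiv.swap_mul_self, mul_one] at h
  have hfil : ((Finset.Ioo i j).filter fun k =>
      (π * Equiv.swap i j) i < (π * Equiv.swap i j) k ∧ (π * Equiv.swap i j) k < (π * Equiv.swap i j) j)
      = ((Finset.Ioo i j).filter fun k => π j < π k ∧ π k < π i) := by
    apply Finset.filter_congr
    intro k hk
    simp only [Finset.mem_Ioo] at hk
    simp only [Equiv.Perm.mul_apply, Equiv.swap_apply_left, Equiv.swap_apply_right,
      Equiv.swap_apply_of_ne_of_ne (ne_of_gt hk.1) (ne_of_lt hk.2)]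
  rw [hfil] at h
  omega

def IsCov (π : Equiv.Perm (Fin n)) (i j : Fin n) : Prop :=
  i < j ∧ π i < π j ∧ ∀ k, i < k → k < j → ¬(π i < π k ∧ π k < π j)

lemma isCov_valid {π : Equiv.Perm (Fin n)} {i j : Fin n} (h : IsCov π i j) :
    invNum (π * Equiv.swap i j) = invNum π + 1 := by
  obtain ⟨hij, hv, hmid⟩ := h
  have hcard : ((Finset.Ioo i j).filter fun k => π i < π k ∧ π k < π j).card = 0 := by
    rw [Finset.card_eq_zero, Finset.filter_eq_empty_iff]
    intro k hk
    rw [Finset.mem_Ioo] at hk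
    exact hmid k hk.1 hk.2
  rw [invNum_swap_of_lt π hij hv, hcard]

lemma valid_isCov {π : Equiv.Perm (Fin n)} {i j : Fin n} (hij : i < j)
    (h : invNum (π * Equiv.swap i j) = invNum π + 1) : IsCov π i j := by
  have hne : π i ≠ π j := fun hh => (ne_of_lt hij) (π.injective hh)
  rcases lt_or_gt_of_ne hne with hv | hv
  · have h1 := invNum_swap_of_lt π hij hv
    have hcard : ((Finset.Ioo i j).filter fun k => π i < π k ∧ π k < π j).card = 0 := by omega
    rw [Finset.card_eq_zero, Finset.filter_eq_empty_iff] at hcard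
    exact ⟨hij, hv, fun k hk1 hk2 => hcard (Finset.mem_Ioo.mpr ⟨hk1, hk2⟩)⟩
  · have h1 := invNum_swap_of_gt π hij hv
    omega

lemma notValid_of_gt {π : Equiv.Perm (Fin n)} {i j : Fin n} (hij : i < j) (hv : π j < π i) :
    invNum (π * Equiv.swap i j) ≠ invNum π + 1 := by
  have := invNum_swap_of_gt π hij hv
  omega

lemma notValid_of_mid {π : Equiv.Perm (Fin n)} {i j k : Fin n} (hij : i < j)
    (h1 : i < k) (h2 : k < j) (h3 : π i < π k) (h4 : π k < π j) :
    invNum (π * Equiv.swap i j) ≠ invNum π + 1 := by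
  have hv : π i < π j := lt_trans h3 h4
  have h := invNum_swap_of_lt π hij hv
  have hpos : 0 < ((Finset.Ioo i j).filter fun k => π i < π k ∧ π k < π j).card := by
    apply Finset.card_pos.mpr
    exact ⟨k, Finset.mem_filter.mpr ⟨Finset.mem_Ioo.mpr ⟨h1, h2⟩, h3, h4⟩⟩
  omega

-- chain lemmas
lemma bruhatLt_invNum {a b : Equiv.Perm (Fin n)} (h : BruhatLt a b) : invNum a < invNum b := by
  induction h with
  | single h => have := h.2; omega
  | tail _ h ih => have := h.2; omega

lemma bruhatCov_of_succ {a b : Equiv.Perm (Fin n)} (h : BruhatLt a b)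
    (hl : invNum b = invNum a + 1) : BruhatCov a b := by
  cases h with
  | single h1 => exact h1
  | tail h1 h2 =>
    exfalso
    have e1 := h2.2
    have e2 := bruhatLt_invNum h1
    omega

lemma exists_mid {π γ : Equiv.Perm (Fin n)} (hlt : BruhatLt π γ)
    (hlen : invNum γ = invNum π + 2) : ∃ z, BruhatCov π z ∧ BruhatCov z γ := by
  cases hlt with
  | single h1 => exfalso; have := h1.2; omega
  | tail h1 h2 =>
    have hc := h2.2
    have h3 := bruhatLt_invNum h1
    exact ⟨_, bruhatCov_of_succ h1 (by omega), h2⟩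

lemma mid_iff {π γ : Equiv.Perm (Fin n)} (hlen : invNum γ = invNum π + 2)
    {w : Equiv.Perm (Fin n)} :
    (BruhatLt π w ∧ BruhatLt w γ) ↔ (BruhatCov π w ∧ BruhatCov w γ) := by
  constructor
  · rintro ⟨h1, h2⟩
    have l1 := bruhatLt_invNum h1
    have l2 := bruhatLt_invNum h2
    exact ⟨bruhatCov_of_succ h1 (by omega), bruhatCov_of_succ h2 (by omega)⟩
  · rintro ⟨h1, h2⟩
    exact ⟨Relation.TransGen.single h1, Relation.TransGen.single h2⟩

lemma main_count {π γ : Equiv.Perm (Fin n)} (hlen : invNum γ = invNum π + 2)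
    (z₀ z₁ : Equiv.Perm (Fin n)) (hne : z₀ ≠ z₁)
    (h00 : BruhatCov π z₀) (h01 : BruhatCov z₀ γ)
    (h10 : BruhatCov π z₁) (h11 : BruhatCov z₁ γ)
    (huniq : ∀ w, BruhatCov π w → BruhatCov w γ → w = z₀ ∨ w = z₁) :
    {w : Equiv.Perm (Fin n) | BruhatLt π w ∧ BruhatLt w γ}.ncard = 2 := by
  have hset : {w : Equiv.Perm (Fin n) | BruhatLt π w ∧ BruhatLt w γ} = {z₀, z₁} := by
    ext w
    simp only [Set.mem_setOf_eq, Set.mem_insert_iff, Set.mem_singleton_iff]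
    rw [mid_iff hlen]
    constructor
    · rintro ⟨h1, h2⟩; exact huniq w h1 h2
    · rintro (rfl | rfl)
      · exact ⟨h00, h01⟩
      · exact ⟨h10, h11⟩
  rw [hset, Set.ncard_pair hne]


section SwapIdent
variable {α : Type*} [DecidableEq α]

lemma swap_prod_E1 {x y z : α} (hxy : x ≠ y) (hyz : y ≠ z) (hxz : x ≠ z) :
    Equiv.swap x y * Equiv.swap y z = Equiv.swap y z * Equiv.swap x z := by
  ext u
  simp only [Equiv.Perm.mul_apply, Equiv.swap_apply_def]
  split_ifs <;> simp_all

lemma swap_prod_E2 {x y z : α} (hxy : x ≠ y) (hyz : y ≠ z) (hxz : x ≠ z) :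
    Equiv.swap x y * Equiv.swap y z = Equiv.swap x z * Equiv.swap x y := by
  ext u
  simp only [Equiv.Perm.mul_apply, Equiv.swap_apply_def]
  split_ifs <;> simp_all

lemma swap_prod_E3 {x y z : α} (hxy : x ≠ y) (hyz : y ≠ z) (hxz : x ≠ z) :
    Equiv.swap x y * Equiv.swap x z = Equiv.swap y z * Equiv.swap x y := by
  ext u
  simp only [Equiv.Perm.mul_apply, Equiv.swap_apply_def]
  split_ifs <;> simp_all

lemma swap_prod_E4 {x y z : α} (hxy : x ≠ y) (hyz : y ≠ z) (hxz : x ≠ z) :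
    Equiv.swap x y * Equiv.swap x z = Equiv.swap x z * Equiv.swap y z := by
  ext u
  simp only [Equiv.Perm.mul_apply, Equiv.swap_apply_def]
  split_ifs <;> simp_all

lemma swap_disjoint_comm {i j k l : α} (h1 : i ≠ k) (h2 : i ≠ l) (h3 : j ≠ k) (h4 : j ≠ l) :
    Equiv.swap i j * Equiv.swap k l = Equiv.swap k l * Equiv.swap i j := by
  ext u
  simp only [Equiv.Perm.mul_apply, Equiv.swap_apply_def]
  split_ifs <;> simp_all

lemma swap_eq_swap_cases' {a b c d : α} (hab : a ≠ b)
    (h : Equiv.swap a b = Equiv.swap c d) : (a = c ∧ b = d) ∨ (a = d ∧ b = c) := by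
  have h1 : Equiv.swap c d a = b := by rw [← h, Equiv.swap_apply_left]
  by_cases hac : a = c
  · subst hac
    rw [Equiv.swap_apply_left] at h1
    exact Or.inl ⟨rfl, h1.symm⟩
  by_cases had : a = d
  · subst had
    rw [Equiv.swap_apply_right] at h1
    exact Or.inr ⟨rfl, h1.symm⟩
  · rw [Equiv.swap_apply_of_ne_of_ne hac had] at h1
    exact absurd h1 hab

end SwapIdent

section Classify
variable {α : Type*} [DecidableEq α]

lemma classify_disjoint (g : Equiv.Perm α) (x y z w : α)
    (hxy : x ≠ y) (hzw : z ≠ w) (hxz : x ≠ z) (hxw : x ≠ w) (hyz : y ≠ z) (hyw : y ≠ w)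
    (hgx : g x = y) (hgy : g y = x) (hgz : g z = w) (hgw : g w = z)
    (hfix : ∀ u, u ≠ x → u ≠ y → u ≠ z → u ≠ w → g u = u)
    {a b c d : α} (hab : a ≠ b) (hcd : c ≠ d)
    (heq : Equiv.swap a b * g = Equiv.swap c d) :
    (a = x ∧ b = y) ∨ (a = y ∧ b = x) ∨ (a = z ∧ b = w) ∨ (a = w ∧ b = z) := by
  have hg2 : ∀ u, g (g u) = u := by
    intro u
    by_cases h1 : u = x; · rw [h1, hgx, hgy]
    by_cases h2 : u = y; · rw [h2, hgy, hgx]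
    by_cases h3 : u = z; · rw [h3, hgz, hgw]
    by_cases h4 : u = w; · rw [h4, hgw, hgz]
    rw [hfix u h1 h2 h3 h4, hfix u h1 h2 h3 h4]
  have hgg : g * g = 1 := by
    ext u; simp only [Equiv.Perm.mul_apply, Equiv.Perm.one_apply, hg2]
  have hginv : g⁻¹ = g := inv_eq_of_mul_eq_one_right hgg
  have hinv : (Equiv.swap a b * g) * (Equiv.swap a b * g) = 1 := by
    rw [heq]; exact Equiv.swap_mul_self c d
  have hcomm : Equiv.swap a b * g = g * Equiv.swap a b := by
    have h1 : (Equiv.swap a b * g)⁻¹ = Equiv.swap a b * g := inv_eq_of_mul_eq_one_right hinv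
    calc Equiv.swap a b * g = (Equiv.swap a b * g)⁻¹ := h1.symm
    _ = g⁻¹ * (Equiv.swap a b)⁻¹ := mul_inv_rev _ _
    _ = g * Equiv.swap a b := by rw [hginv, Equiv.swap_inv]
  have hpt : ∀ u, Equiv.swap a b (g u) = g (Equiv.swap a b u) := by
    intro u
    have := DFunLike.congr_fun hcomm u
    simpa [Equiv.Perm.mul_apply] using this
  by_cases hga : g a = a
  · exfalso
    have hgb : g b = b := by
      have h1 := hpt a
      rw [hga, Equiv.swap_apply_left] at h1
      exact h1.symm
    have hax : a ≠ x := fun h => hxy (by rw [h, hgx] at hga; exact hga.symm)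
    have hay : a ≠ y := fun h => hxy (by rw [h, hgy] at hga; exact hga)
    have haz : a ≠ z := fun h => hzw (by rw [h, hgz] at hga; exact hga.symm)
    have haw : a ≠ w := fun h => hzw (by rw [h, hgw] at hga; exact hga)
    have hbx : b ≠ x := fun h => hxy (by rw [h, hgx] at hgb; exact hgb.symm)
    have hby : b ≠ y := fun h => hxy (by rw [h, hgy] at hgb; exact hgb)
    have hbz : b ≠ z := fun h => hzw (by rw [h, hgz] at hgb; exact hgb.symm)
    have hbw : b ≠ w := fun h => hzw (by rw [h, hgw] at hgb; exact hgb)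
    have hcdx : Equiv.swap c d x = y := by
      rw [← heq]
      simp only [Equiv.Perm.mul_apply, hgx]
      exact Equiv.swap_apply_of_ne_of_ne (Ne.symm hay) (Ne.symm hby)
    have hcdz : Equiv.swap c d z = w := by
      rw [← heq]
      simp only [Equiv.Perm.mul_apply, hgz]
      exact Equiv.swap_apply_of_ne_of_ne (Ne.symm haw) (Ne.symm hbw)
    have hcdy : Equiv.swap c d y = x := by
      have := congrArg (Equiv.swap c d) hcdx
      rw [Equiv.swap_apply_self] at this
      exact this.symm
    have hx' : x = c ∨ x = d := by
      have : Equiv.swap c d x ≠ x := by rw [hcdx]; exact Ne.symm hxy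
      by_contra hc
      push_neg at hc
      exact this (Equiv.swap_apply_of_ne_of_ne hc.1 hc.2)
    have hy' : y = c ∨ y = d := by
      have : Equiv.swap c d y ≠ y := by rw [hcdy]; exact hxy
      by_contra hc
      push_neg at hc
      exact this (Equiv.swap_apply_of_ne_of_ne hc.1 hc.2)
    have hz' : z = c ∨ z = d := by
      have : Equiv.swap c d z ≠ z := by rw [hcdz]; exact Ne.symm hzw
      by_contra hc
      push_neg at hc
      exact this (Equiv.swap_apply_of_ne_of_ne hc.1 hc.2)
    rcases hx' with h | h <;> rcases hy' with h' | h' <;> rcases hz' with h'' | h'' <;>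
      simp_all
  · by_cases hgab : g a = b
    · have hgb : g b = a := by rw [← hgab, hg2]
      by_cases hax : a = x
      · exact Or.inl ⟨hax, by rw [hax, hgx] at hgab; exact hgab.symm⟩
      by_cases hay : a = y
      · exact Or.inr (Or.inl ⟨hay, by rw [hay, hgy] at hgab; exact hgab.symm⟩)
      by_cases haz : a = z
      · exact Or.inr (Or.inr (Or.inl ⟨haz, by rw [haz, hgz] at hgab; exact hgab.symm⟩))
      by_cases haw : a = w
      · exact Or.inr (Or.inr (Or.inr ⟨haw, by rw [haw, hgw] at hgab; exact hgab.symm⟩))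
      · exact absurd (hfix a hax hay haz haw) hga
    · exfalso
      have h1 := hpt a
      rw [Equiv.swap_apply_left, Equiv.swap_apply_of_ne_of_ne hga hgab] at h1
      exact hab (g.injective h1)

lemma classify_threecycle_aux (g : Equiv.Perm α) (x y z : α)
    (hxy : x ≠ y) (hyz : y ≠ z) (hxz : x ≠ z)
    (hgx : g x ≠ x) (hgy : g y ≠ y) (hgz : g z ≠ z)
    (hfix : ∀ u, u ≠ x → u ≠ y → u ≠ z → g u = u)
    (hgg : g (g x) ≠ x)
    {a b c d : α} (hab : a ≠ b) (hcd : c ≠ d)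
    (heq : Equiv.swap a b * g = Equiv.swap c d) :
    a = x ∨ a = y ∨ a = z := by
  have hmapS : ∀ u, (u = x ∨ u = y ∨ u = z) → (g u = x ∨ g u = y ∨ g u = z) := by
    intro u hu
    by_contra hc
    push_neg at hc
    have h1 := hfix (g u) hc.1 hc.2.1 hc.2.2
    have h2 : g u = u := g.injective h1
    rcases hu with h | h | h <;> rw [h] at h2
    · exact hgx h2
    · exact hgy h2
    · exact hgz h2
  have hinv : (Equiv.swap a b * g) * (Equiv.swap a b * g) = 1 := by
    rw [heq]; exact Equiv.swap_mul_self c d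
  have hpt : ∀ u, Equiv.swap a b (g (Equiv.swap a b (g u))) = u := by
    intro u
    have := DFunLike.congr_fun hinv u
    simpa [Equiv.Perm.mul_apply] using this
  by_contra hc
  push_neg at hc
  obtain ⟨hax, hay, haz⟩ := hc
  have hga : g a = a := hfix a hax hay haz
  have h1 : Equiv.swap a b (g b) = a := by
    have := hpt a
    rwa [hga, Equiv.swap_apply_left] at this
  have hgb : g b = b := by
    by_cases h : g b = a
    · rw [h, Equiv.swap_apply_left] at h1
      exact absurd h1 (Ne.symm hab)
    by_cases h' : g b = b
    · exact h'
    · rw [Equiv.swap_apply_of_ne_of_ne h h'] at h1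
      exact absurd h1 h
  have hbx : b ≠ x := fun h => hgx (h ▸ hgb)
  have hby : b ≠ y := fun h => hgy (h ▸ hgb)
  have hbz : b ≠ z := fun h => hgz (h ▸ hgb)
  have hkey : ∀ u, (u = x ∨ u = y ∨ u = z) → g (g u) = u := by
    intro u hu
    have htu : Equiv.swap a b u = u :=
      Equiv.swap_apply_of_ne_of_ne
        (by rcases hu with h | h | h <;> rw [h] <;> [exact Ne.symm hax; exact Ne.symm hay; exact Ne.symm haz])
        (by rcases hu with h | h | h <;> rw [h] <;> [exact Ne.symm hbx; exact Ne.symm hby; exact Ne.symm hbz])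
    have hgu := hmapS u hu
    have htgu : Equiv.swap a b (g u) = g u :=
      Equiv.swap_apply_of_ne_of_ne
        (by rcases hgu with h | h | h <;> rw [h] <;> [exact Ne.symm hax; exact Ne.symm hay; exact Ne.symm haz])
        (by rcases hgu with h | h | h <;> rw [h] <;> [exact Ne.symm hbx; exact Ne.symm hby; exact Ne.symm hbz])
    have hggu := hmapS _ hgu
    have htggu : Equiv.swap a b (g (g u)) = g (g u) :=
      Equiv.swap_apply_of_ne_of_ne
        (by rcases hggu with h | h | h <;> rw [h] <;> [exact Ne.symm hax; exact Ne.symm hay; exact Ne.symm haz])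
        (by rcases hggu with h | h | h <;> rw [h] <;> [exact Ne.symm hbx; exact Ne.symm hby; exact Ne.symm hbz])
    have := hpt u
    rwa [htgu, htggu] at this
  exact hgg (hkey x (Or.inl rfl))

lemma classify_threecycle (g : Equiv.Perm α) (x y z : α)
    (hxy : x ≠ y) (hyz : y ≠ z) (hxz : x ≠ z)
    (hgx : g x ≠ x) (hgy : g y ≠ y) (hgz : g z ≠ z)
    (hfix : ∀ u, u ≠ x → u ≠ y → u ≠ z → g u = u)
    (hgg : g (g x) ≠ x)
    {a b c d : α} (hab : a ≠ b) (hcd : c ≠ d)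
    (heq : Equiv.swap a b * g = Equiv.swap c d) :
    (a = x ∨ a = y ∨ a = z) ∧ (b = x ∨ b = y ∨ b = z) := by
  refine ⟨classify_threecycle_aux g x y z hxy hyz hxz hgx hgy hgz hfix hgg hab hcd heq, ?_⟩
  apply classify_threecycle_aux g x y z hxy hyz hxz hgx hgy hgz hfix hgg (Ne.symm hab) hcd
  rwa [Equiv.swap_comm b a]

end Classify

section Scenarios
variable {π : Equiv.Perm (Fin n)} {x y z : Fin n}

private lemma ne_of_apply_lt {a b : Fin n} (h : π a < π b) : a ≠ b :=
  fun hh => absurd (congrArg π hh) (ne_of_lt h)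

lemma mulswap_apply_of_ne {p q k : Fin n} (h1 : k ≠ p) (h2 : k ≠ q) :
    (π * Equiv.swap p q) k = π k := by
  rw [Equiv.Perm.mul_apply, Equiv.swap_apply_of_ne_of_ne h1 h2]

lemma mulswap_apply_left (p q : Fin n) : (π * Equiv.swap p q) p = π q := by
  rw [Equiv.Perm.mul_apply, Equiv.swap_apply_left]

lemma mulswap_apply_right (p q : Fin n) : (π * Equiv.swap p q) q = π p := by
  rw [Equiv.Perm.mul_apply, Equiv.swap_apply_right]

lemma scenario1 (hxy : x < y) (hyz : y < z)
    (h0 : IsCov π x y) (h1 : IsCov (π * Equiv.swap x y) y z) :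
    (IsCov π y z ∧ invNum (π * Equiv.swap x z) ≠ invNum π + 1) ∨
    (IsCov π x z ∧ invNum (π * Equiv.swap y z) ≠ invNum π + 1) := by
  have hxz : x < z := lt_trans hxy hyz
  obtain ⟨-, hAB, hm1⟩ := h0
  obtain ⟨-, h2v, h2m⟩ := h1
  rw [mulswap_apply_right x y, mulswap_apply_of_ne hxz.ne' hyz.ne'] at h2v
  -- h2v : π x < π z
  have h2m' : ∀ k, y < k → k < z → ¬(π x < π k ∧ π k < π z) := by
    intro k hk1 hk2
    have := h2m k hk1 hk2
    rwa [mulswap_apply_right x y,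
      mulswap_apply_of_ne (ne_of_gt (lt_trans hxy hk1)) (ne_of_gt hk1),
      mulswap_apply_of_ne hxz.ne' hyz.ne'] at this
  rcases lt_trichotomy (π y) (π z) with hBC | hE | hCB
  · left
    refine ⟨⟨hyz, hBC, fun k hk1 hk2 hk => h2m' k hk1 hk2 ⟨lt_trans hAB hk.1, hk.2⟩⟩, ?_⟩
    exact notValid_of_mid hxz hxy hyz hAB hBC
  · exact absurd (π.injective hE) (ne_of_lt hyz)
  · right
    refine ⟨⟨hxz, h2v, fun k hk1 hk2 hk => ?_⟩, notValid_of_gt hyz hCB⟩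
    rcases lt_trichotomy k y with hky | hky | hky
    · exact hm1 k hk1 hky ⟨hk.1, lt_trans hk.2 hCB⟩
    · rw [hky] at hk
      exact absurd hk.2 (not_lt.mpr (le_of_lt hCB))
    · exact h2m' k hky hk2 hk

lemma scenario2 (hxy : x < y) (hyz : y < z)
    (h0 : IsCov π y z) (h1 : IsCov (π * Equiv.swap y z) x z) :
    IsCov π x y ∧ invNum (π * Equiv.swap x z) ≠ invNum π + 1 := by
  have hxz : x < z := lt_trans hxy hyz
  obtain ⟨-, hBC, hm2⟩ := h0
  obtain ⟨-, h2v, h2m⟩ := h1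
  rw [mulswap_apply_of_ne (ne_of_lt hxy) (ne_of_lt hxz), mulswap_apply_right y z] at h2v
  -- h2v : π x < π y
  have h1mid : ∀ k, x < k → k < y → ¬(π x < π k ∧ π k < π y) := by
    intro k hk1 hk2
    have := h2m k hk1 (lt_trans hk2 hyz)
    rwa [mulswap_apply_of_ne (ne_of_lt hxy) (ne_of_lt hxz), mulswap_apply_right y z,
      mulswap_apply_of_ne (ne_of_lt hk2) (ne_of_lt (lt_trans hk2 hyz))] at this
  exact ⟨⟨hxy, h2v, h1mid⟩, notValid_of_mid hxz hxy hyz h2v hBC⟩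

lemma scenario3 (hxy : x < y) (hyz : y < z)
    (h0 : IsCov π x z) (h1 : IsCov (π * Equiv.swap x z) x y) :
    IsCov π x y ∧ invNum (π * Equiv.swap y z) ≠ invNum π + 1 := by
  have hxz : x < z := lt_trans hxy hyz
  obtain ⟨-, hAC, hm3⟩ := h0
  obtain ⟨-, h2v, h2m⟩ := h1
  rw [mulswap_apply_left x z, mulswap_apply_of_ne (ne_of_gt hxy) (ne_of_lt hyz)] at h2v
  -- h2v : π z < π y
  have h1mid : ∀ k, x < k → k < y → ¬(π z < π k ∧ π k < π y) := by
    intro k hk1 hk2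
    have := h2m k hk1 hk2
    rwa [mulswap_apply_left x z, mulswap_apply_of_ne (ne_of_gt hk1) (ne_of_lt (lt_trans hk2 hyz)),
      mulswap_apply_of_ne (ne_of_gt hxy) (ne_of_lt hyz)] at this
  have hAB : π x < π y := lt_trans hAC h2v
  refine ⟨⟨hxy, hAB, fun k hk1 hk2 hk => ?_⟩, notValid_of_gt hyz h2v⟩
  rcases lt_trichotomy (π k) (π z) with hkC | hkC | hkC
  · exact hm3 k hk1 (lt_trans hk2 hyz) ⟨hk.1, hkC⟩
  · exact absurd (π.injective hkC) (ne_of_lt (lt_trans hk2 hyz))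
  · exact h1mid k hk1 hk2 ⟨hkC, hk.2⟩

lemma scenario4 (hxy : x < y) (hyz : y < z)
    (h0 : IsCov π x y) (h1 : IsCov (π * Equiv.swap x y) x z) :
    IsCov π y z ∧ invNum (π * Equiv.swap x z) ≠ invNum π + 1 := by
  have hxz : x < z := lt_trans hxy hyz
  obtain ⟨-, hAB, hm1⟩ := h0
  obtain ⟨-, h2v, h2m⟩ := h1
  rw [mulswap_apply_left x y, mulswap_apply_of_ne hxz.ne' hyz.ne'] at h2v
  -- h2v : π y < π z
  have h2m' : ∀ k, y < k → k < z → ¬(π y < π k ∧ π k < π z) := by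
    intro k hk1 hk2
    have := h2m k (lt_trans hxy hk1) hk2
    rwa [mulswap_apply_left x y,
      mulswap_apply_of_ne (ne_of_gt (lt_trans hxy hk1)) (ne_of_gt hk1),
      mulswap_apply_of_ne hxz.ne' hyz.ne'] at this
  exact ⟨⟨hyz, h2v, h2m'⟩, notValid_of_mid hxz hxy hyz hAB h2v⟩

lemma scenario5 (hxy : x < y) (hyz : y < z)
    (h0 : IsCov π y z) (h1 : IsCov (π * Equiv.swap y z) x y) :
    (IsCov π x y ∧ invNum (π * Equiv.swap x z) ≠ invNum π + 1) ∨
    (IsCov π x z ∧ invNum (π * Equiv.swap x y) ≠ invNum π + 1) := by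
  have hxz : x < z := lt_trans hxy hyz
  obtain ⟨-, hBC, hm2⟩ := h0
  obtain ⟨-, h2v, h2m⟩ := h1
  rw [mulswap_apply_of_ne (ne_of_lt hxy) (ne_of_lt hxz), mulswap_apply_left y z] at h2v
  -- h2v : π x < π z
  have h1mid : ∀ k, x < k → k < y → ¬(π x < π k ∧ π k < π z) := by
    intro k hk1 hk2
    have := h2m k hk1 hk2
    rwa [mulswap_apply_of_ne (ne_of_lt hxy) (ne_of_lt hxz), mulswap_apply_left y z,
      mulswap_apply_of_ne (ne_of_lt hk2) (ne_of_lt (lt_trans hk2 hyz))] at this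
  rcases lt_trichotomy (π x) (π y) with hAB | hE | hBA
  · left
    refine ⟨⟨hxy, hAB, fun k hk1 hk2 hk => h1mid k hk1 hk2 ⟨hk.1, lt_trans hk.2 hBC⟩⟩, ?_⟩
    exact notValid_of_mid hxz hxy hyz hAB hBC
  · exact absurd (π.injective hE) (ne_of_lt hxy)
  · right
    refine ⟨⟨hxz, h2v, fun k hk1 hk2 hk => ?_⟩, notValid_of_gt hxy hBA⟩
    rcases lt_trichotomy k y with hky | hky | hky
    · exact h1mid k hk1 hky hk
    · rw [hky] at hk
      exact absurd (lt_trans hk.1 hBA) (lt_irrefl _)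
    · exact hm2 k hky hk2 ⟨lt_trans hBA hk.1, hk.2⟩

lemma scenario6 (hxy : x < y) (hyz : y < z)
    (h0 : IsCov π x z) (h1 : IsCov (π * Equiv.swap x z) y z) :
    IsCov π y z ∧ invNum (π * Equiv.swap x y) ≠ invNum π + 1 := by
  have hxz : x < z := lt_trans hxy hyz
  obtain ⟨-, hAC, hm3⟩ := h0
  obtain ⟨-, h2v, h2m⟩ := h1
  rw [mulswap_apply_of_ne (ne_of_gt hxy) (ne_of_lt hyz), mulswap_apply_right x z] at h2v
  -- h2v : π y < π x
  have h2m' : ∀ k, y < k → k < z → ¬(π y < π k ∧ π k < π x) := by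
    intro k hk1 hk2
    have := h2m k hk1 hk2
    rwa [mulswap_apply_of_ne (ne_of_gt hxy) (ne_of_lt hyz),
      mulswap_apply_of_ne (ne_of_gt (lt_trans hxy hk1)) (ne_of_lt hk2),
      mulswap_apply_right x z] at this
  have hBC : π y < π z := lt_trans h2v hAC
  refine ⟨⟨hyz, hBC, fun k hk1 hk2 hk => ?_⟩, notValid_of_gt hxy h2v⟩
  rcases lt_trichotomy (π k) (π x) with hkA | hkA | hkA
  · exact h2m' k hk1 hk2 ⟨hk.1, hkA⟩
  · exact absurd (π.injective hkA) (ne_of_gt (lt_trans hxy hk1))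
  · exact hm3 k (lt_trans hxy hk1) hk2 ⟨hkA, hk.2⟩

end Scenarios

section GFacts
variable {α : Type*} [DecidableEq α]

lemma gfacts1 {x y z : α} (hxy : x ≠ y) (hyz : y ≠ z) (hxz : x ≠ z) :
    (Equiv.swap x y * Equiv.swap y z) x = y ∧ (Equiv.swap x y * Equiv.swap y z) y = z ∧
    (Equiv.swap x y * Equiv.swap y z) z = x ∧
    ∀ u, u ≠ x → u ≠ y → u ≠ z → (Equiv.swap x y * Equiv.swap y z) u = u := by
  refine ⟨?_, ?_, ?_, ?_⟩
  · rw [Equiv.Perm.mul_apply, Equiv.swap_apply_of_ne_of_ne hxy hxz, Equiv.swap_apply_left]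
  · rw [Equiv.Perm.mul_apply, Equiv.swap_apply_left,
      Equiv.swap_apply_of_ne_of_ne (Ne.symm hxz) (Ne.symm hyz)]
  · rw [Equiv.Perm.mul_apply, Equiv.swap_apply_right, Equiv.swap_apply_right]
  · intro u h1 h2 h3
    rw [Equiv.Perm.mul_apply, Equiv.swap_apply_of_ne_of_ne h2 h3,
      Equiv.swap_apply_of_ne_of_ne h1 h2]

lemma gfacts2 {x y z : α} (hxy : x ≠ y) (hyz : y ≠ z) (hxz : x ≠ z) :
    (Equiv.swap x y * Equiv.swap x z) x = z ∧ (Equiv.swap x y * Equiv.swap x z) y = x ∧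
    (Equiv.swap x y * Equiv.swap x z) z = y ∧
    ∀ u, u ≠ x → u ≠ y → u ≠ z → (Equiv.swap x y * Equiv.swap x z) u = u := by
  refine ⟨?_, ?_, ?_, ?_⟩
  · rw [Equiv.Perm.mul_apply, Equiv.swap_apply_left,
      Equiv.swap_apply_of_ne_of_ne (Ne.symm hxz) (Ne.symm hyz)]
  · rw [Equiv.Perm.mul_apply, Equiv.swap_apply_of_ne_of_ne (Ne.symm hxy) hyz,
      Equiv.swap_apply_right]
  · rw [Equiv.Perm.mul_apply, Equiv.swap_apply_right, Equiv.swap_apply_left]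
  · intro u h1 h2 h3
    rw [Equiv.Perm.mul_apply, Equiv.swap_apply_of_ne_of_ne h1 h3,
      Equiv.swap_apply_of_ne_of_ne h1 h2]

end GFacts

lemma assemble_threecycle {π γ : Equiv.Perm (Fin n)} (hlen : invNum γ = invNum π + 2)
    {x y z : Fin n} (hxy : x < y) (hyz : y < z)
    {a₀ b₀ a₁ b₁ a₂ b₂ a₃ b₃ ab bb : Fin n}
    (h0ne : a₀ ≠ b₀) (h1ne : a₁ ≠ b₁) (h2ne : a₂ ≠ b₂) (h3ne : a₃ ≠ b₃)
    (hγ : γ = π * Equiv.swap a₀ b₀ * Equiv.swap a₁ b₁)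
    (hid : Equiv.swap a₀ b₀ * Equiv.swap a₁ b₁ = Equiv.swap a₂ b₂ * Equiv.swap a₃ b₃)
    (h0 : invNum (π * Equiv.swap a₀ b₀) = invNum π + 1)
    (h2 : invNum (π * Equiv.swap a₂ b₂) = invNum π + 1)
    (hbad : invNum (π * Equiv.swap ab bb) ≠ invNum π + 1)
    (hnep : Equiv.swap a₀ b₀ ≠ Equiv.swap a₂ b₂)
    (hcyc : Equiv.swap a₀ b₀ * Equiv.swap a₁ b₁ = Equiv.swap x y * Equiv.swap y z ∨
            Equiv.swap a₀ b₀ * Equiv.swap a₁ b₁ = Equiv.swap x y * Equiv.swap x z)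
    (hc1 : Equiv.swap x y = Equiv.swap a₀ b₀ ∨ Equiv.swap x y = Equiv.swap a₂ b₂ ∨
           Equiv.swap x y = Equiv.swap ab bb)
    (hc2 : Equiv.swap y z = Equiv.swap a₀ b₀ ∨ Equiv.swap y z = Equiv.swap a₂ b₂ ∨
           Equiv.swap y z = Equiv.swap ab bb)
    (hc3 : Equiv.swap x z = Equiv.swap a₀ b₀ ∨ Equiv.swap x z = Equiv.swap a₂ b₂ ∨
           Equiv.swap x z = Equiv.swap ab bb) :
    {w : Equiv.Perm (Fin n) | BruhatLt π w ∧ BruhatLt w γ}.ncard = 2 := by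
  have hxy' : x ≠ y := ne_of_lt hxy
  have hyz' : y ≠ z := ne_of_lt hyz
  have hxz' : x ≠ z := ne_of_lt (lt_trans hxy hyz)
  apply main_count hlen (π * Equiv.swap a₀ b₀) (π * Equiv.swap a₂ b₂)
  · exact fun h => hnep (mul_left_cancel h)
  · exact ⟨⟨a₀, b₀, h0ne, rfl⟩, h0⟩
  · exact ⟨⟨a₁, b₁, h1ne, by rw [hγ]⟩, by omega⟩
  · exact ⟨⟨a₂, b₂, h2ne, rfl⟩, h2⟩
  · exact ⟨⟨a₃, b₃, h3ne, by rw [hγ, mul_assoc, hid, mul_assoc]⟩, by omega⟩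
  · rintro w ⟨⟨a, b, hab, rfl⟩, hwinv⟩ ⟨⟨c, d, hcd, hγ2⟩, -⟩
    have hprod : Equiv.swap a b * Equiv.swap c d = Equiv.swap a₀ b₀ * Equiv.swap a₁ b₁ := by
      have h1 : π * (Equiv.swap a b * Equiv.swap c d) = π * (Equiv.swap a₀ b₀ * Equiv.swap a₁ b₁) := by
        rw [← mul_assoc, ← hγ2, hγ, mul_assoc]
      exact mul_left_cancel h1
    have heq : Equiv.swap a b * (Equiv.swap a₀ b₀ * Equiv.swap a₁ b₁) = Equiv.swap c d := by
      rw [← hprod, ← mul_assoc, Equiv.swap_mul_self, one_mul]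
    have hclass : (a = x ∨ a = y ∨ a = z) ∧ (b = x ∨ b = y ∨ b = z) := by
      rcases hcyc with hcy | hcy <;> rw [hcy] at heq
      · obtain ⟨g1, g2, g3, g4⟩ := gfacts1 hxy' hyz' hxz'
        apply classify_threecycle _ x y z hxy' hyz' hxz' ?_ ?_ ?_ g4 ?_ hab hcd heq
        · rw [g1]; exact Ne.symm hxy'
        · rw [g2]; exact Ne.symm hyz'
        · rw [g3]; exact hxz'
        · rw [g1, g2]; exact Ne.symm hxz'
      · obtain ⟨g1, g2, g3, g4⟩ := gfacts2 hxy' hyz' hxz'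
        apply classify_threecycle _ x y z hxy' hyz' hxz' ?_ ?_ ?_ g4 ?_ hab hcd heq
        · rw [g1]; exact Ne.symm hxz'
        · rw [g2]; exact hxy'
        · rw [g3]; exact hyz'
        · rw [g1, g3]; exact Ne.symm hxy'
    have henum : Equiv.swap a b = Equiv.swap x y ∨ Equiv.swap a b = Equiv.swap y z ∨
        Equiv.swap a b = Equiv.swap x z := by
      obtain ⟨ha, hb⟩ := hclass
      rcases ha with rfl | rfl | rfl <;> rcases hb with rfl | rfl | rfl
      · exact absurd rfl hab
      · exact Or.inl rfl
      · exact Or.inr (Or.inr rfl)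
      · exact Or.inl (Equiv.swap_comm _ _)
      · exact absurd rfl hab
      · exact Or.inr (Or.inl rfl)
      · exact Or.inr (Or.inr (Equiv.swap_comm _ _))
      · exact Or.inr (Or.inl (Equiv.swap_comm _ _))
      · exact absurd rfl hab
    have hfin : Equiv.swap a b = Equiv.swap a₀ b₀ ∨ Equiv.swap a b = Equiv.swap a₂ b₂ ∨
        Equiv.swap a b = Equiv.swap ab bb := by
      rcases henum with h | h | h
      · rw [h]; exact hc1
      · rw [h]; exact hc2
      · rw [h]; exact hc3
    rcases hfin with h | h | h
    · exact Or.inl (by rw [h])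
    · exact Or.inr (by rw [h])
    · exfalso
      rw [h] at hwinv
      exact hbad hwinv

lemma assemble_disjoint {π γ : Equiv.Perm (Fin n)} (hlen : invNum γ = invNum π + 2)
    {i j k l : Fin n} (hij : i < j) (hkl : k < l)
    (hik : i ≠ k) (hil : i ≠ l) (hjk : j ≠ k) (hjl : j ≠ l)
    (hγ : γ = π * Equiv.swap i j * Equiv.swap k l)
    (h0 : invNum (π * Equiv.swap i j) = invNum π + 1)
    (h2 : invNum (π * Equiv.swap k l) = invNum π + 1) :
    {w : Equiv.Perm (Fin n) | BruhatLt π w ∧ BruhatLt w γ}.ncard = 2 := by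
  have hij' : i ≠ j := ne_of_lt hij
  have hkl' : k ≠ l := ne_of_lt hkl
  have hcomm := swap_disjoint_comm hik hil hjk hjl
  apply main_count hlen (π * Equiv.swap i j) (π * Equiv.swap k l)
  · intro h
    have h1 := mul_left_cancel h
    rcases swap_eq_swap_cases' hij' h1 with ⟨h2', _⟩ | ⟨h2', _⟩
    · exact hik h2'
    · exact hil h2'
  · exact ⟨⟨i, j, hij', rfl⟩, h0⟩
  · exact ⟨⟨k, l, hkl', by rw [hγ]⟩, by omega⟩
  · exact ⟨⟨k, l, hkl', rfl⟩, h2⟩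
  · exact ⟨⟨i, j, hij', by rw [hγ, mul_assoc, hcomm, mul_assoc]⟩, by omega⟩
  · rintro w ⟨⟨a, b, hab, rfl⟩, hwinv⟩ ⟨⟨c, d, hcd, hγ2⟩, -⟩
    have hprod : Equiv.swap a b * Equiv.swap c d = Equiv.swap i j * Equiv.swap k l := by
      have h1 : π * (Equiv.swap a b * Equiv.swap c d) = π * (Equiv.swap i j * Equiv.swap k l) := by
        rw [← mul_assoc, ← hγ2, hγ, mul_assoc]
      exact mul_left_cancel h1
    have heq : Equiv.swap a b * (Equiv.swap i j * Equiv.swap k l) = Equiv.swap c d := by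
      rw [← hprod, ← mul_assoc, Equiv.swap_mul_self, one_mul]
    have hgi : (Equiv.swap i j * Equiv.swap k l) i = j := by
      rw [Equiv.Perm.mul_apply, Equiv.swap_apply_of_ne_of_ne hik hil, Equiv.swap_apply_left]
    have hgj : (Equiv.swap i j * Equiv.swap k l) j = i := by
      rw [Equiv.Perm.mul_apply, Equiv.swap_apply_of_ne_of_ne hjk hjl, Equiv.swap_apply_right]
    have hgk : (Equiv.swap i j * Equiv.swap k l) k = l := by
      rw [Equiv.Perm.mul_apply, Equiv.swap_apply_left,
        Equiv.swap_apply_of_ne_of_ne (Ne.symm hil) (Ne.symm hjl)]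
    have hgl : (Equiv.swap i j * Equiv.swap k l) l = k := by
      rw [Equiv.Perm.mul_apply, Equiv.swap_apply_right,
        Equiv.swap_apply_of_ne_of_ne (Ne.symm hik) (Ne.symm hjk)]
    have hfix : ∀ u, u ≠ i → u ≠ j → u ≠ k → u ≠ l →
        (Equiv.swap i j * Equiv.swap k l) u = u := by
      intro u h1 h2' h3 h4
      rw [Equiv.Perm.mul_apply, Equiv.swap_apply_of_ne_of_ne h3 h4,
        Equiv.swap_apply_of_ne_of_ne h1 h2']
    rcases classify_disjoint _ i j k l hij' hkl' hik hil hjk hjl hgi hgj hgk hgl hfix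
      hab hcd heq with ⟨rfl, rfl⟩ | ⟨rfl, rfl⟩ | ⟨rfl, rfl⟩ | ⟨rfl, rfl⟩
    · exact Or.inl rfl
    · exact Or.inl (by rw [Equiv.swap_comm])
    · exact Or.inr rfl
    · exact Or.inr (by rw [Equiv.swap_comm])


lemma disjoint_good {π : Equiv.Perm (Fin n)} {i j k l : Fin n} (hij : i < j) (hkl : k < l)
    (hik : i ≠ k) (hil : i ≠ l) (hjk : j ≠ k) (hjl : j ≠ l)
    (h0 : IsCov π i j) (h1 : IsCov (π * Equiv.swap i j) k l) : IsCov π k l := by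
  obtain ⟨-, hAB, hm0⟩ := h0
  obtain ⟨-, h2v, h2m⟩ := h1
  rw [mulswap_apply_of_ne (Ne.symm hik) (Ne.symm hjk),
    mulswap_apply_of_ne (Ne.symm hil) (Ne.symm hjl)] at h2v
  refine ⟨hkl, h2v, fun m hm1 hm2 hm => ?_⟩
  by_cases hmi : m = i
  · rw [hmi] at hm hm1 hm2
    have h2mi := h2m i hm1 hm2
    rw [mulswap_apply_left, mulswap_apply_of_ne (Ne.symm hik) (Ne.symm hjk),
      mulswap_apply_of_ne (Ne.symm hil) (Ne.symm hjl)] at h2mi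
    rcases lt_trichotomy (π j) (π l) with h | h | h
    · exact h2mi ⟨lt_trans hm.1 hAB, h⟩
    · exact hjl (π.injective h)
    · rcases lt_trichotomy j l with h' | h' | h'
      · have h2mj := h2m j (lt_trans hm1 hij) h'
        rw [mulswap_apply_right, mulswap_apply_of_ne (Ne.symm hik) (Ne.symm hjk),
          mulswap_apply_of_ne (Ne.symm hil) (Ne.symm hjl)] at h2mj
        exact h2mj hm
      · exact hjl h'
      · exact hm0 l hm2 h' ⟨hm.2, h⟩
  by_cases hmj : m = j
  · rw [hmj] at hm hm1 hm2
    have h2mj := h2m j hm1 hm2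
    rw [mulswap_apply_right, mulswap_apply_of_ne (Ne.symm hik) (Ne.symm hjk),
      mulswap_apply_of_ne (Ne.symm hil) (Ne.symm hjl)] at h2mj
    have hAl : π i < π l := lt_trans hAB hm.2
    have hAk : π i < π k := by
      rcases lt_trichotomy (π i) (π k) with h | h | h
      · exact h
      · exact absurd (π.injective h) hik
      · exact absurd ⟨h, hAl⟩ h2mj
    rcases lt_trichotomy i k with h' | h' | h'
    · exact hm0 k h' hm1 ⟨hAk, hm.1⟩
    · exact hik h'
    · have h2mi := h2m i h' (lt_trans hij hm2)
      rw [mulswap_apply_left, mulswap_apply_of_ne (Ne.symm hik) (Ne.symm hjk),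
        mulswap_apply_of_ne (Ne.symm hil) (Ne.symm hjl)] at h2mi
      exact h2mi hm
  · have h2mm := h2m m hm1 hm2
    rw [mulswap_apply_of_ne hmi hmj, mulswap_apply_of_ne (Ne.symm hik) (Ne.symm hjk),
      mulswap_apply_of_ne (Ne.symm hil) (Ne.symm hjl)] at h2mm
    exact h2mm hm


lemma swap_ne_of (a b c d : Fin n) (hab : a ≠ b)
    (h1 : ¬(a = c ∧ b = d)) (h2 : ¬(a = d ∧ b = c)) :
    Equiv.swap a b ≠ Equiv.swap c d := by
  intro h
  rcases swap_eq_swap_cases' hab h with h' | h'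
  · exact h1 h'
  · exact h2 h'

end BruhatAux

open BruhatAux in
/-- The Bruhat order on `S_n` is thin: every interval of length 2 is a diamond. -/
theorem bruhat_thin {n : ℕ} (π γ : Equiv.Perm (Fin n))
    (hlt : BruhatLt π γ) (hlen : invNum γ = invNum π + 2) :
    {z : Equiv.Perm (Fin n) | BruhatLt π z ∧ BruhatLt z γ}.ncard = 2 := by
  classical
  obtain ⟨z₀, h0, h1⟩ := exists_mid hlt hlen
  obtain ⟨⟨i0, j0, hne0, hz0⟩, hv0⟩ := h0
  obtain ⟨⟨k0, l0, hne1, hg0⟩, hv1⟩ := h1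
  obtain ⟨i, j, hij, hz⟩ : ∃ i j, i < j ∧ z₀ = π * Equiv.swap i j := by
    rcases hne0.lt_or_gt with h | h
    · exact ⟨i0, j0, h, hz0⟩
    · exact ⟨j0, i0, h, by rw [hz0, Equiv.swap_comm]⟩
  obtain ⟨k, l, hkl, hγ'⟩ : ∃ k l, k < l ∧ γ = z₀ * Equiv.swap k l := by
    rcases hne1.lt_or_gt with h | h
    · exact ⟨k0, l0, h, hg0⟩
    · exact ⟨l0, k0, h, by rw [hg0, Equiv.swap_comm]⟩
  rw [hz] at hv0 hγ' hv1
  have hγ : γ = π * Equiv.swap i j * Equiv.swap k l := hγ'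
  have hv1' : invNum ((π * Equiv.swap i j) * Equiv.swap k l)
      = invNum (π * Equiv.swap i j) + 1 := by rw [← hγ]; exact hv1
  have hcov0 : IsCov π i j := valid_isCov hij hv0
  have hcov1 : IsCov (π * Equiv.swap i j) k l := valid_isCov hkl hv1'
  have hij' : i ≠ j := ne_of_lt hij
  have hkl' : k ≠ l := ne_of_lt hkl
  by_cases hik : i = k
  · by_cases hjl : j = l
    · exfalso
      rw [← hik, ← hjl, mul_assoc, Equiv.swap_mul_self, mul_one] at hγ
      rw [hγ] at hlen
      omega
    · subst hik
      rcases lt_or_gt_of_ne hjl with hjl2 | hjl2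
      · -- config 4 : x,y,z = i,j,l
        obtain ⟨hgood, hbad⟩ := scenario4 hij hjl2 hcov0 hcov1
        exact assemble_threecycle (x := i) (y := j) (z := l) hlen hij hjl2
          hij' hkl' (ne_of_lt hjl2) hij' hγ
          (swap_prod_E3 hij' (ne_of_lt hjl2) hkl')
          hv0 (isCov_valid hgood) hbad
          (swap_ne_of i j j l hij' (fun h => hij' h.1) (fun h => hkl' h.1))
          (Or.inr rfl) (Or.inl rfl) (Or.inr (Or.inl rfl)) (Or.inr (Or.inr rfl))
      · -- config 5 : x,y,z = i,l,j
        obtain ⟨hgood, hbad⟩ := scenario3 hkl hjl2 hcov0 hcov1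
        exact assemble_threecycle (x := i) (y := l) (z := j) hlen hkl hjl2
          hij' hkl' hkl' (ne_of_lt hjl2) hγ
          ((swap_prod_E2 hkl' (ne_of_lt hjl2) hij').symm)
          hv0 (isCov_valid hgood) hbad
          (swap_ne_of i j i l hij' (fun h => hjl h.2) (fun h => hkl' h.1))
          (Or.inl (swap_prod_E2 hkl' (ne_of_lt hjl2) hij').symm)
          (Or.inr (Or.inl rfl)) (Or.inr (Or.inr rfl)) (Or.inl rfl)
  · by_cases hjl : j = l
    · subst hjl
      rcases lt_or_gt_of_ne hik with hik2 | hik2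
      · -- config 2 : x,y,z = i,k,j
        obtain ⟨hgood, hbad⟩ := scenario6 hik2 hkl hcov0 hcov1
        exact assemble_threecycle (x := i) (y := k) (z := j) hlen hik2 hkl
          hij' hkl' hkl' hik hγ
          (((swap_prod_E4 hik hkl' hij').symm).trans (swap_prod_E3 hik hkl' hij'))
          hv0 (isCov_valid hgood) hbad
          (swap_ne_of i j k j hij' (fun h => hik h.1) (fun h => hij' h.1))
          (Or.inr (swap_prod_E4 hik hkl' hij').symm)
          (Or.inr (Or.inr rfl)) (Or.inr (Or.inl rfl)) (Or.inl rfl)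
      · -- config 3 : x,y,z = k,i,j
        obtain ⟨hgood, hbad⟩ := scenario2 hik2 hij hcov0 hcov1
        exact assemble_threecycle (x := k) (y := i) (z := j) hlen hik2 hij
          hij' hkl' (ne_of_lt hik2) hij' hγ
          ((swap_prod_E1 (ne_of_lt hik2) hij' hkl').symm)
          hv0 (isCov_valid hgood) hbad
          (swap_ne_of i j k i hij' (fun h => hik h.1)
            (fun h => (ne_of_gt (lt_trans hik2 hij)) h.2))
          (Or.inl (swap_prod_E1 (ne_of_lt hik2) hij' hkl').symm)
          (Or.inr (Or.inl rfl)) (Or.inl rfl) (Or.inr (Or.inr rfl))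
    · by_cases hjk : j = k
      · subst hjk
        -- config 1 : x,y,z = i,j,l
        have hil' : i ≠ l := ne_of_lt (lt_trans hij hkl)
        rcases scenario1 hij hkl hcov0 hcov1 with ⟨hgood, hbad⟩ | ⟨hgood, hbad⟩
        · exact assemble_threecycle (x := i) (y := j) (z := l) hlen hij hkl
            hij' hkl' hkl' hil' hγ
            (swap_prod_E1 hij' hkl' hil')
            hv0 (isCov_valid hgood) hbad
            (swap_ne_of i j j l hij' (fun h => hij' h.1) (fun h => hil' h.1))
            (Or.inl rfl)
            (Or.inl rfl) (Or.inr (Or.inl rfl)) (Or.inr (Or.inr rfl))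
        · exact assemble_threecycle (x := i) (y := j) (z := l) hlen hij hkl
            hij' hkl' hil' hij' hγ
            (swap_prod_E2 hij' hkl' hil')
            hv0 (isCov_valid hgood) hbad
            (swap_ne_of i j i l hij' (fun h => hkl' h.2) (fun h => hil' h.1))
            (Or.inl rfl)
            (Or.inl rfl) (Or.inr (Or.inr rfl)) (Or.inr (Or.inl rfl))
      · by_cases hil : i = l
        · subst hil
          -- config 6 : x,y,z = k,i,j
          have hki' : k ≠ i := ne_of_lt hkl
          have hkj' : k ≠ j := ne_of_lt (lt_trans hkl hij)
          rcases scenario5 hkl hij hcov0 hcov1 with ⟨hgood, hbad⟩ | ⟨hgood, hbad⟩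
          · exact assemble_threecycle (x := k) (y := i) (z := j) hlen hkl hij
              hij' hki' hki' hkj' hγ
              ((swap_prod_E3 hki' hij' hkj').symm)
              hv0 (isCov_valid hgood) hbad
              (swap_ne_of i j k i hij' (fun h => (Ne.symm hki') h.1)
                (fun h => (Ne.symm hkj') h.2))
              (Or.inr (swap_prod_E3 hki' hij' hkj').symm)
              (Or.inr (Or.inl rfl)) (Or.inl rfl) (Or.inr (Or.inr rfl))
          · exact assemble_threecycle (x := k) (y := i) (z := j) hlen hkl hij
              hij' hki' hkj' hij' hγ
              (((swap_prod_E3 hki' hij' hkj').symm).trans (swap_prod_E4 hki' hij' hkj'))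
              hv0 (isCov_valid hgood) hbad
              (swap_ne_of i j k j hij' (fun h => (Ne.symm hki') h.1) (fun h => hij' h.1))
              (Or.inr (swap_prod_E3 hki' hij' hkj').symm)
              (Or.inr (Or.inr rfl)) (Or.inl rfl) (Or.inr (Or.inl rfl))
        · -- disjoint case
          have hgoodkl : IsCov π k l := disjoint_good hij hkl hik hil hjk hjl hcov0 hcov1
          exact assemble_disjoint hlen hij hkl hik hil hjk hjl hγ hv0 (isCov_valid hgoodkl)
end
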